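/- The function A(x) = 2x·artanh(x) + 4·√(1−x²) − 4 is nonnegative and monotone increasing on the interval [0,1). -/

import Mathlib

/-- Inverse hyperbolic tangent. -/
noncomputable def artanh (x : ℝ) : ℝ := (1 / 2) * Real.log ((1 + x) / (1 - x))

lemma hasDerivAt_artanh' {x : ℝ} (h1 : -1 < x) (h2 : x < 1) :
    HasDerivAt artanh (1 / (1 - x ^ 2)) x := by
  have hx1 : (0:ℝ) < 1 + x := by linarith
  have hx2 : (0:ℝ) < 1 - x := by linarith
  have ha : HasDerivAt (fun y : ℝ => 1 + y) 1 x := by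
    simpa using (hasDerivAt_id x).const_add 1
  have hb : HasDerivAt (fun y : ℝ => 1 - y) (-1) x := by
    simpa using (hasDerivAt_id x).const_sub 1
  have hu : HasDerivAt (fun y : ℝ => (1 + y) / (1 - y))
      ((1 * (1 - x) - (1 + x) * (-1)) / (1 - x) ^ 2) x := ha.div hb hx2.ne'
  have huv : (0:ℝ) < (1 + x) / (1 - x) := div_pos hx1 hx2
  have hl := (hu.log huv.ne').const_mul (1/2 : ℝ)
  refine hl.congr_deriv ?_
  have h3 : 1 - x ^ 2 ≠ 0 := by nlinarith
  field_simp
  ring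

lemma artanh_zero : artanh 0 = 0 := by simp [artanh]

lemma continuousOn_artanh : ContinuousOn artanh (Set.Ico (0:ℝ) 1) := fun x hx =>
  ((hasDerivAt_artanh' (by linarith [hx.1]) hx.2).continuousAt).continuousWithinAt

lemma le_artanh {x : ℝ} (hx : x ∈ Set.Ico (0:ℝ) 1) : x ≤ artanh x := by
  have hmono : MonotoneOn (fun y : ℝ => artanh y - y) (Set.Ico (0:ℝ) 1) := by
    have hder : ∀ y ∈ Set.Ico (0:ℝ) 1,
        HasDerivAt (fun y : ℝ => artanh y - y) (1 / (1 - y ^ 2) - 1) y := fun y hy =>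
      (hasDerivAt_artanh' (by linarith [hy.1]) hy.2).sub (hasDerivAt_id y)
    apply monotoneOn_of_deriv_nonneg (convex_Ico 0 1)
    · exact continuousOn_artanh.sub continuousOn_id
    · rw [interior_Ico]
      exact fun y hy => ((hder y (Set.Ioo_subset_Ico_self hy)).differentiableAt).differentiableWithinAt
    · rw [interior_Ico]
      intro y hy
      rw [(hder y (Set.Ioo_subset_Ico_self hy)).deriv]
      have h1 : (0:ℝ) < 1 - y ^ 2 := by nlinarith [hy.1, hy.2]
      have h2 : 1 - y ^ 2 ≤ 1 := by nlinarith [hy.1]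
      have := (one_le_div h1).mpr h2
      linarith
  have h0 : (0:ℝ) ∈ Set.Ico (0:ℝ) 1 := by simp
  have := hmono h0 hx hx.1
  simpa [artanh_zero] using this

/-- The function `A(x) = 2x artanh x + 4 √(1-x²) - 4` is nonnegative
and monotone increasing on `[0,1)`. -/
theorem nonneg_and_monotoneOn_ledrappier_gain :
    (∀ x ∈ Set.Ico (0 : ℝ) 1,
        0 ≤ 2 * x * artanh x + 4 * Real.sqrt (1 - x ^ 2) - 4) ∧
      MonotoneOn (fun x : ℝ => 2 * x * artanh x + 4 * Real.sqrt (1 - x ^ 2) - 4)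
        (Set.Ico (0 : ℝ) 1) := by
  set f : ℝ → ℝ := fun x => 2 * x * artanh x + 4 * Real.sqrt (1 - x ^ 2) - 4 with hf
  have hder : ∀ x ∈ Set.Ico (0:ℝ) 1, HasDerivAt f
      (2 * artanh x + 2 * x / (1 - x ^ 2) - 4 * x / Real.sqrt (1 - x ^ 2)) x := by
    intro x hx
    have hx2 : (0:ℝ) < 1 - x ^ 2 := by nlinarith [hx.1, hx.2]
    have h1 : HasDerivAt (fun y : ℝ => 2 * y * artanh y)
        (2 * artanh x + 2 * x * (1 / (1 - x ^ 2))) x := by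
      have := ((hasDerivAt_id x).const_mul (2:ℝ)).mul
        (hasDerivAt_artanh' (by linarith [hx.1]) hx.2)
      refine this.congr_deriv ?_
      simp only [id_eq]
      ring
    have hg : HasDerivAt (fun y : ℝ => 1 - y ^ 2) (-(2 * x)) x := by
      simpa using ((hasDerivAt_pow 2 x).const_sub 1)
    have h2 : HasDerivAt (fun y : ℝ => Real.sqrt (1 - y ^ 2))
        (-(2 * x) / (2 * Real.sqrt (1 - x ^ 2))) x := hg.sqrt hx2.ne'
    have hs : (0:ℝ) < Real.sqrt (1 - x ^ 2) := Real.sqrt_pos.mpr hx2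
    have := (h1.add (h2.const_mul 4)).sub_const 4
    refine this.congr_deriv ?_
    field_simp
    ring
  have hmono : MonotoneOn f (Set.Ico (0:ℝ) 1) := by
    apply monotoneOn_of_deriv_nonneg (convex_Ico 0 1)
    · apply ContinuousOn.sub _ continuousOn_const
      apply ContinuousOn.add
      · exact (continuousOn_const.mul continuousOn_id).mul continuousOn_artanh
      · exact continuousOn_const.mul
          ((continuousOn_const.sub (continuousOn_pow 2)).sqrt)
    · rw [interior_Ico]
      exact fun x hx =>
        ((hder x (Set.Ioo_subset_Ico_self hx)).differentiableAt).differentiableWithinAt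
    · rw [interior_Ico]
      intro x hx
      rw [(hder x (Set.Ioo_subset_Ico_self hx)).deriv]
      have hx0 : (0:ℝ) < x := hx.1
      have hx2 : (0:ℝ) < 1 - x ^ 2 := by nlinarith [hx.2]
      set t := Real.sqrt (1 - x ^ 2) with htdef
      have ht : t ^ 2 = 1 - x ^ 2 := Real.sq_sqrt hx2.le
      have ht0 : (0:ℝ) < t := Real.sqrt_pos.mpr hx2
      have key : 2 * x / (1 - x ^ 2) - 4 * x / t = -(2 * x) + 2 * x * (1 - t) ^ 2 / t ^ 2 := by
        rw [← ht]
        field_simp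
        ring
      have hA : x ≤ artanh x := le_artanh (Set.Ioo_subset_Ico_self hx)
      have hpos : 0 ≤ 2 * x * (1 - t) ^ 2 / t ^ 2 := by positivity
      linarith [key]
  refine ⟨fun x hx => ?_, hmono⟩
  have h0 : (0:ℝ) ∈ Set.Ico (0:ℝ) 1 := by simp
  have := hmono h0 hx hx.1
  have hf0 : f 0 = 0 := by simp [hf, artanh_zero]
  rw [hf0] at this
  exact this
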